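/- arXiv:2102.07290 — 2 statements merged into one kernel-verified Lean document; each statement's English description precedes it below -/
import Mathlib

section
/- For every positive integer n, the number of monic irreducible polynomials of degree n in F_q[x], excluding the polynomial x itself, equals (1/n) Σ_{d | n} μ(d) (q^{n/d} − 1), where μ is the Möbius function. (For n ≥ 2 this equals the usual count of monic irreducibles of degree n; for n = 1 it is q − 1.) -/
open Polynomial

/-- The number of monic irreducible polynomials of degree `d` over `F`, excluding the
polynomial `x` itself. -/
noncomputable def phiCount (F : Type) [Field F] (d : ℕ) : ℕ :=
  Nat.card {p : Polynomial F // p.Monic ∧ Irreducible p ∧ p.natDegree = d ∧ p ≠ X}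

section GaussCountAux

open IntermediateField

set_option linter.unusedSectionVars false

variable (F : Type) [Field F] [Fintype F]


lemma finite_natDegree_le (d : ℕ) : {p : F[X] | p.natDegree ≤ d}.Finite := by
  have : Finite (Polynomial.degreeLT F (d+1)) :=
    Finite.of_equiv _ (Polynomial.degreeLTEquiv F (d+1)).symm.toEquiv
  apply Set.Finite.subset (Set.finite_range (fun x : Polynomial.degreeLT F (d+1) => (x : F[X])))
  intro p hp
  refine ⟨⟨p, ?_⟩, rfl⟩
  rw [Polynomial.mem_degreeLT]
  calc p.degree ≤ (p.natDegree : WithBot ℕ) := degree_le_natDegree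
  _ < ((d+1 : ℕ) : WithBot ℕ) := by exact_mod_cast Nat.lt_succ_of_le hp

lemma gauss_key (m : ℕ) (hm : 0 < m) :
    Fintype.card F ^ m = ∑ d ∈ m.divisors,
      d * Nat.card {p : F[X] // p.Monic ∧ Irreducible p ∧ p.natDegree = d} := by
  classical
  set q := Fintype.card F with hq
  have hq1 : 1 < q := Fintype.one_lt_card
  -- characteristic
  set p := ringChar F with hp
  haveI hpF : CharP F p := ringChar.charP F
  haveI hpprime : Fact p.Prime := ⟨CharP.char_is_prime F p⟩
  obtain ⟨k, -, hqp⟩ := FiniteField.card F p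
  set g : F[X] := X ^ q ^ m - X with hg
  have hgdeg : g.natDegree = q ^ m :=
    FiniteField.X_pow_card_pow_sub_X_natDegree_eq F hm.ne' hq1
  have hg0 : g ≠ 0 := FiniteField.X_pow_card_pow_sub_X_ne_zero F hm.ne' hq1
  have hqm0 : q ^ m = p ^ ((k : ℕ) * m) := by rw [hq, hqp, ← pow_mul]
  have hsep : g.Separable := galois_poly_separable p (q ^ m) (by
    rw [hqm0]; exact dvd_pow_self p (by positivity))
  set E := g.SplittingField with hE
  have hsplits : Splits (g.map (algebraMap F E)) := SplittingField.splits g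
  haveI : CharP E p := charP_of_injective_algebraMap (algebraMap F E).injective p
  haveI : Finite E := Module.finite_of_finite F
  haveI : Fintype E := Fintype.ofFinite E
  -- every element of E satisfies x ^ q ^ m = x
  have hfix : ∀ x : E, x ^ q ^ m = x := by
    let φ : E →ₐ[F] E :=
      { toRingHom := iterateFrobenius E p ((k : ℕ) * m)
        commutes' := by
          intro a
          show iterateFrobenius E p ((k : ℕ) * m) (algebraMap F E a) = algebraMap F E a
          rw [iterateFrobenius_def, ← map_pow, ← hqm0]
          congr 1
          rw [hq]
          exact FiniteField.pow_card_pow m a }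
    have hphi : ∀ x : E, φ x = x ^ q ^ m := by
      intro x
      show iterateFrobenius E p ((k : ℕ) * m) x = x ^ q ^ m
      rw [iterateFrobenius_def, hqm0]
    have heq : φ = AlgHom.id F E := by
      apply AlgHom.ext_of_adjoin_eq_top (IsSplittingField.adjoin_rootSet E g)
      intro x hx
      have hxr : aeval x g = 0 := (mem_rootSet.mp hx).2
      have h0 : x ^ q ^ m - x = 0 := by simpa [hg] using hxr
      show φ x = x
      rw [hphi, sub_eq_zero] at *
      exact h0
    intro x
    have := DFunLike.congr_fun heq x
    rwa [hphi, AlgHom.id_apply] at this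
  -- card E = q ^ m
  have hroots_nodup : ((g.map (algebraMap F E)).roots).Nodup :=
    Polynomial.nodup_roots (hsep.map (f := algebraMap F E))
  have hroots_card : Multiset.card ((g.map (algebraMap F E)).roots) = q ^ m := by
    rw [← hsplits.natDegree_eq_card_roots, natDegree_map, hgdeg]
  have huniv : ((g.map (algebraMap F E)).roots).toFinset = Finset.univ := by
    apply Finset.eq_univ_of_forall
    intro x
    rw [Multiset.mem_toFinset, mem_roots (map_ne_zero hg0), IsRoot.def, eval_map,
      ← aeval_def]
    simp [hg, hfix x]
  have hcardE : Fintype.card E = q ^ m := by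
    rw [← Finset.card_univ, ← huniv, Multiset.toFinset_card_of_nodup hroots_nodup, hroots_card]
  have hfinrank : Module.finrank F E = m := by
    have h := Module.card_eq_pow_finrank (K := F) (V := E)
    rw [hcardE, ← hq] at h
    exact (Nat.pow_right_injective hq1 h.symm)
  -- monic irreducible π with natDegree ∣ m divides g
  have hdvd_of : ∀ π : F[X], π.Monic → Irreducible π → π.natDegree ∣ m → π ∣ g := by
    intro π hmon hirr hd
    haveI := Fact.mk hirr
    haveI : Module.Finite F (AdjoinRoot π) := (AdjoinRoot.powerBasis hmon.ne_zero).finite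
    haveI : Finite (AdjoinRoot π) := Module.finite_of_finite F
    haveI : Fintype (AdjoinRoot π) := Fintype.ofFinite _
    have hfr : Module.finrank F (AdjoinRoot π) = π.natDegree := by
      rw [(AdjoinRoot.powerBasis hmon.ne_zero).finrank, AdjoinRoot.powerBasis_dim]
    have hcardK : Fintype.card (AdjoinRoot π) = q ^ π.natDegree := by
      rw [Module.card_eq_pow_finrank (K := F), hfr, ← hq]
    obtain ⟨t, ht⟩ := hd
    have hroot : (AdjoinRoot.root π) ^ q ^ m = AdjoinRoot.root π := by
      rw [ht, pow_mul, ← hcardK]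
      exact FiniteField.pow_card_pow t _
    have haev : aeval (AdjoinRoot.root π) g = 0 := by
      rw [hg]; simp [map_sub, map_pow, hroot]
    have h2 := minpoly.dvd F (AdjoinRoot.root π) haev
    rwa [AdjoinRoot.minpoly_root hmon.ne_zero, hmon.leadingCoeff, inv_one, map_one,
      mul_one] at h2
  -- finite sets of monic irreducibles
  have hSfin : ∀ d : ℕ, {π : F[X] | π.Monic ∧ Irreducible π ∧ π.natDegree = d}.Finite :=
    fun d => (finite_natDegree_le F d).subset (fun π hπ => le_of_eq hπ.2.2)
  have hPPfin : {π : F[X] | π.Monic ∧ Irreducible π ∧ π.natDegree ∣ m}.Finite :=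
    (finite_natDegree_le F m).subset (fun π hπ => Nat.le_of_dvd hm hπ.2.2)
  set PP := hPPfin.toFinset with hPP
  -- every minimal polynomial of an element of E is in PP
  have hdegdvd : ∀ α : E, (minpoly F α).natDegree ∣ m := by
    intro α
    have hint : IsIntegral F α := IsIntegral.of_finite F α
    have h1 : Module.finrank F F⟮α⟯ * Module.finrank F⟮α⟯ E = Module.finrank F E :=
      Module.finrank_mul_finrank F F⟮α⟯ E
    rw [IntermediateField.adjoin.finrank hint, hfinrank] at h1
    exact ⟨_, h1.symm⟩
  have hmem : ∀ α : E, minpoly F α ∈ PP := by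
    intro α
    have hint : IsIntegral F α := IsIntegral.of_finite F α
    rw [hPP, Set.Finite.mem_toFinset]
    exact ⟨minpoly.monic hint, minpoly.irreducible hint, hdegdvd α⟩
  -- fibers of the minimal polynomial map
  have hfiber : ∀ π ∈ PP, (Finset.univ.filter fun α : E => minpoly F α = π).card
      = π.natDegree := by
    intro π hπ
    rw [hPP, Set.Finite.mem_toFinset] at hπ
    obtain ⟨hmon, hirr, hd⟩ := hπ
    have hπdvd : π ∣ g := hdvd_of π hmon hirr hd
    have hπsplits : Splits (π.map (algebraMap F E)) :=
      hsplits.of_dvd (map_ne_zero hg0) (Polynomial.map_dvd _ hπdvd)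
    have hπsep : π.Separable := hsep.of_dvd hπdvd
    have hfilter : (Finset.univ.filter fun α : E => minpoly F α = π) =
        ((π.map (algebraMap F E)).roots).toFinset := by
      ext α
      simp only [Finset.mem_filter, Finset.mem_univ, true_and, Multiset.mem_toFinset,
        mem_roots (map_ne_zero hmon.ne_zero), IsRoot.def, eval_map, ← aeval_def]
      constructor
      · rintro rfl; exact minpoly.aeval F α
      · intro h; exact (minpoly.eq_of_irreducible_of_monic hirr h hmon).symm
    rw [hfilter, Multiset.toFinset_card_of_nodup
      (Polynomial.nodup_roots (hπsep.map (f := algebraMap F E))),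
      ← hπsplits.natDegree_eq_card_roots, natDegree_map]
  -- main count
  have hmain : q ^ m = ∑ π ∈ PP, π.natDegree := by
    rw [← hcardE, ← Finset.card_univ,
      Finset.card_eq_sum_card_fiberwise (fun α _ => hmem α)]
    exact Finset.sum_congr rfl hfiber
  -- regroup by degree
  have hdeg_mem : ∀ π ∈ PP, π.natDegree ∈ m.divisors := by
    intro π hπ
    rw [hPP, Set.Finite.mem_toFinset] at hπ
    exact Nat.mem_divisors.mpr ⟨hπ.2.2, hm.ne'⟩
  rw [hmain, ← Finset.sum_fiberwise_of_maps_to hdeg_mem (fun π => π.natDegree)]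
  apply Finset.sum_congr rfl
  intro d hd
  have hconst : ∑ π ∈ PP.filter (fun π => π.natDegree = d), π.natDegree
      = (PP.filter (fun π => π.natDegree = d)).card * d := by
    rw [Finset.sum_congr rfl (fun π hπ => (Finset.mem_filter.mp hπ).2),
      Finset.sum_const, smul_eq_mul]
  rw [hconst, mul_comm]
  congr 1
  -- the filtered set is exactly the monic irreducibles of degree d
  have hset : Nat.card {p : F[X] // p.Monic ∧ Irreducible p ∧ p.natDegree = d}
      = (hSfin d).toFinset.card := by
    rw [← Set.ncard_eq_toFinset_card _ (hSfin d)]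
    exact Nat.card_coe_set_eq _
  rw [hset]
  congr 1
  ext π
  rw [Finset.mem_filter, hPP, Set.Finite.mem_toFinset, Set.Finite.mem_toFinset]
  constructor
  · rintro ⟨⟨h1, h2, -⟩, h4⟩; exact ⟨h1, h2, h4⟩
  · rintro ⟨h1, h2, h3⟩
    exact ⟨⟨h1, h2, h3 ▸ (Nat.mem_divisors.mp hd).1⟩, h3⟩

lemma Ncard_eq_phi (d : ℕ) (hd : d ≠ 1) :
    Nat.card {p : F[X] // p.Monic ∧ Irreducible p ∧ p.natDegree = d} = phiCount F d := by
  apply Nat.card_congr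
  apply (Equiv.subtypeEquivRight ?_).symm
  intro p
  constructor
  · rintro ⟨h1, h2, h3, -⟩; exact ⟨h1, h2, h3⟩
  · rintro ⟨h1, h2, h3⟩
    refine ⟨h1, h2, h3, ?_⟩
    rintro rfl
    exact hd (h3.symm.trans natDegree_X)

lemma Ncard_one :
    Nat.card {p : F[X] // p.Monic ∧ Irreducible p ∧ p.natDegree = 1} = phiCount F 1 + 1 := by
  have hfin2 : {p : F[X] | p.Monic ∧ Irreducible p ∧ p.natDegree = 1 ∧ p ≠ X}.Finite :=
    (finite_natDegree_le F 1).subset fun p hp => le_of_eq hp.2.2.1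
  have hX : (X : F[X]) ∉ {p : F[X] | p.Monic ∧ Irreducible p ∧ p.natDegree = 1 ∧ p ≠ X} := by
    rintro ⟨-, -, -, h⟩; exact h rfl
  have hins : {p : F[X] | p.Monic ∧ Irreducible p ∧ p.natDegree = 1}
      = insert X {p : F[X] | p.Monic ∧ Irreducible p ∧ p.natDegree = 1 ∧ p ≠ X} := by
    ext p
    simp only [Set.mem_insert_iff, Set.mem_setOf_eq]
    constructor
    · rintro ⟨h1, h2, h3⟩
      by_cases hpX : p = X
      · exact Or.inl hpX
      · exact Or.inr ⟨h1, h2, h3, hpX⟩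
    · rintro (rfl | ⟨h1, h2, h3, -⟩)
      · exact ⟨monic_X, irreducible_X, natDegree_X⟩
      · exact ⟨h1, h2, h3⟩
  have h1 : Nat.card {p : F[X] // p.Monic ∧ Irreducible p ∧ p.natDegree = 1}
      = ({p : F[X] | p.Monic ∧ Irreducible p ∧ p.natDegree = 1}).ncard :=
    Nat.card_coe_set_eq _
  have h2 : phiCount F 1
      = ({p : F[X] | p.Monic ∧ Irreducible p ∧ p.natDegree = 1 ∧ p ≠ X}).ncard :=
    Nat.card_coe_set_eq _
  rw [h1, h2, hins, Set.ncard_insert_of_notMem hX hfin2]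

lemma sum_phi (n : ℕ) (hn : 0 < n) :
    (∑ d ∈ n.divisors, d * phiCount F d) + 1 = Fintype.card F ^ n := by
  rw [gauss_key F n hn]
  have hc : ∀ d ∈ n.divisors,
      d * Nat.card {p : F[X] // p.Monic ∧ Irreducible p ∧ p.natDegree = d}
      = d * phiCount F d + (if d = 1 then 1 else 0) := by
    intro d _
    by_cases h : d = 1
    · subst h; rw [Ncard_one, if_pos rfl]; ring
    · rw [Ncard_eq_phi F d h, if_neg h, add_zero]
  rw [Finset.sum_congr rfl hc, Finset.sum_add_distrib,
    Finset.sum_ite_eq' n.divisors 1 (fun _ => 1),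
    if_pos (Nat.one_mem_divisors.mpr hn.ne')]


end GaussCountAux

/-- For every `n ≥ 1` and finite field `F` with `q` elements, the number of monic
irreducible polynomials of degree `n` in `F[x]` other than `x` equals
`(1/n) ∑_{d ∣ n} μ(d) (q^{n/d} - 1)`. -/
theorem count_monic_irreducible_ne_X (F : Type) [Field F] [Fintype F] (n : ℕ)
    (hn : 0 < n) :
    (phiCount F n : ℚ) =
      (1 / n) * ∑ d ∈ n.divisors,
        (ArithmeticFunction.moebius d : ℚ) * ((Fintype.card F : ℚ) ^ (n / d) - 1) := by
  set f : ℕ → ℚ := fun d => (d : ℚ) * phiCount F d with hf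
  have key : ∀ n' > 0, ∑ d ∈ n'.divisors, f d
      = (Fintype.card F : ℚ) ^ n' - 1 := by
    intro n' hn'
    have h := sum_phi F n' hn'
    have h2 : (((∑ d ∈ n'.divisors, d * phiCount F d) + 1 : ℕ) : ℚ)
        = ((Fintype.card F ^ n' : ℕ) : ℚ) := by exact_mod_cast h
    push_cast at h2
    simp only [hf]
    linarith
  have inv := (ArithmeticFunction.sum_eq_iff_sum_smul_moebius_eq (R := ℚ)
      (f := f)
      (g := fun n' => (Fintype.card F : ℚ) ^ n' - 1)).mp key n hn
  simp only [hf] at inv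
  rw [Nat.sum_divisorsAntidiagonal
    (f := fun a b => (ArithmeticFunction.moebius a) • ((Fintype.card F : ℚ) ^ b - 1))] at inv
  have hsmul : ∀ d ∈ n.divisors, (ArithmeticFunction.moebius d) •
        ((Fintype.card F : ℚ) ^ (n / d) - 1)
      = (ArithmeticFunction.moebius d : ℚ) * ((Fintype.card F : ℚ) ^ (n / d) - 1) := by
    intro d _
    rw [zsmul_eq_mul]
  rw [Finset.sum_congr rfl hsmul] at inv
  rw [inv]
  have hn0 : (n : ℚ) ≠ 0 := Nat.cast_ne_zero.mpr hn.ne'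
  field_simp
end

section
/- The following identity of formal power series in X over Q(q) holds: 1 + Σ_{λ ∈ P} q^{−ℓ(λ)} / b_λ(q^{−1}) · X^{|λ|} = Π_{n=1}^∞ Π_{i=0}^∞ (1 − q^i X^n), where the sum runs over all nonempty partitions λ. -/
/-- `λ'_i`: the number of parts of the partition (multiset of parts) `λ` that are `≥ i`. -/
def mconj (lam : Multiset ℕ) (i : ℕ) : ℕ := (lam.filter (fun p => i ≤ p)).card

/-- `ℓ(λ)`: the number of parts of `λ`. -/
def mlen (lam : Multiset ℕ) : ℕ := Multiset.card lam

/-- `⟨λ, λ⟩ = ∑_{i ≥ 1} (λ'_i)²` (for a partition with positive parts all terms with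
`i > |λ|` vanish, so the sum may be truncated at the weight `|λ| = lam.sum`). -/
def minner (lam : Multiset ℕ) : ℕ := ∑ i ∈ Finset.Icc 1 lam.sum, (mconj lam i) ^ 2

/-- `n_i`: the number of parts of `λ` equal to `i`. -/
def mmult (lam : Multiset ℕ) (i : ℕ) : ℕ := (lam.filter (fun p => p = i)).card
/-- `b_λ(t) = ∏_{i ≥ 1} φ_{n_i}(t)` where `φ_r(t) = (1-t)(1-t²)⋯(1-tʳ)` and `n_i` is the
number of parts of `λ` equal to `i` (factors with `i > |λ|` are `1`). -/
def bval {K : Type} [Field K] (lam : Multiset ℕ) (t : K) : K :=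
  ∏ i ∈ Finset.Icc 1 lam.sum, ∏ j ∈ Finset.Icc 1 (mmult lam i), (1 - t ^ j)

/-- The field `ℚ((q))` of formal Laurent series, in which the variable `q` is invertible
and infinite products like `∏_i (1 - qⁱ Xⁿ)` make sense coefficientwise (the topology on
`ℚ((q))` being the `q`-adic one coming from its valuation). -/
noncomputable abbrev Kq : Type := LaurentSeries ℚ

/-- The variable `q`, as an element of `ℚ((q))`. -/
noncomputable def qv : Kq := HahnSeries.single 1 1

/-- The product (coefficientwise) topology on `ℚ((q))⟦X⟧`. -/
noncomputable instance : TopologicalSpace (PowerSeries Kq) :=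
  inferInstanceAs (TopologicalSpace ((Unit →₀ ℕ) → Kq))


open Finset Multiplicative

local notation "ℤₘ₀" => WithZero (Multiplicative ℤ)

local notation "𝕍" => (Valued.v : Valuation Kq ℤₘ₀)

noncomputable def eE (M r : ℕ) : Kq := ∑ T ∈ (range M).powersetCard r, qv ^ (∑ i ∈ T, i)
noncomputable def ph (r : ℕ) : Kq := ∏ j ∈ Finset.Icc 1 r, (1 - qv ^ j)
noncomputable def av (r : ℕ) : Kq := qv ^ (r.choose 2) / ph r

def ee (m : ℤ) : ℤₘ₀ := ((Multiplicative.ofAdd m : Multiplicative ℤ) : ℤₘ₀)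

lemma ee_mul (m n : ℤ) : ee m * ee n = ee (m + n) := by
  simp [ee, ← WithZero.coe_mul, ← ofAdd_add]

lemma ee_le_ee {m n : ℤ} : ee m ≤ ee n ↔ m ≤ n := by
  simp [ee, WithZero.coe_le_coe, Multiplicative.ofAdd_le]

lemma ee_lt_ee {m n : ℤ} : ee m < ee n ↔ m < n := by
  simp [ee, WithZero.coe_lt_coe, Multiplicative.ofAdd_lt]

lemma ee_one : ee 0 = 1 := rfl

lemma ee_ne_zero (m : ℤ) : ee m ≠ 0 := WithZero.coe_ne_zero

lemma v_qv : 𝕍 qv = ee (-1) := by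
  rw [show ee (-1) = (WithZero.exp 1)⁻¹ from rfl]
  exact LaurentSeries.valuation_single_zpow ℚ 1

lemma ee_pow (m : ℤ) (i : ℕ) : (ee m) ^ i = ee (i * m) := by
  simp [ee, ← WithZero.coe_pow, ← ofAdd_nsmul, nsmul_eq_mul]

lemma v_qv_pow (i : ℕ) : 𝕍 (qv ^ i) = ee (-(i : ℤ)) := by
  rw [map_pow, v_qv, ee_pow]
  congr 1; ring

lemma qv_ne_zero : qv ≠ 0 := by
  intro h
  have := v_qv
  rw [h, map_zero] at this
  exact (ee_ne_zero _) this.symm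

lemma v_qv_pow_le_one (i : ℕ) : 𝕍 (qv ^ i) ≤ 1 := by
  rw [v_qv_pow, ← ee_one, ee_le_ee]; omega

lemma v_one_sub_qv_pow {j : ℕ} (hj : 1 ≤ j) : 𝕍 (1 - qv ^ j) = 1 := by
  apply Valuation.map_one_sub_of_lt
  rw [v_qv_pow, ← ee_one, ee_lt_ee]; omega

lemma v_ph (r : ℕ) : 𝕍 (ph r) = 1 := by
  rw [ph, map_prod]
  apply Finset.prod_eq_one
  intro j hj
  exact v_one_sub_qv_pow (mem_Icc.mp hj).1

lemma ph_ne_zero (r : ℕ) : ph r ≠ 0 := by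
  intro h
  have := v_ph r
  rw [h, map_zero] at this
  exact one_ne_zero this.symm

lemma one_sub_qv_pow_ne_zero {j : ℕ} (hj : 1 ≤ j) : (1 : Kq) - qv ^ j ≠ 0 := by
  intro h
  have := v_one_sub_qv_pow hj
  rw [h, map_zero] at this
  exact one_ne_zero this.symm

lemma v_av (r : ℕ) : 𝕍 (av r) = ee (-(r.choose 2 : ℤ)) := by
  rw [av, map_div₀, v_ph, v_qv_pow, div_one]

lemma v_av_le_one (r : ℕ) : 𝕍 (av r) ≤ 1 := by
  rw [v_av, ← ee_one, ee_le_ee]; omega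

lemma v_eE_le_one (M r : ℕ) : 𝕍 (eE M r) ≤ 1 := by
  apply Valuation.map_sum_le
  intro T _
  exact v_qv_pow_le_one _

-- recursions
lemma eE_zero_r (M : ℕ) : eE M 0 = 1 := by
  simp [eE]

lemma eE_M_zero (r : ℕ) : eE 0 (r + 1) = 0 := by
  have h : Finset.powersetCard (r+1) (∅ : Finset ℕ) = ∅ := by
    rw [Finset.powersetCard_eq_empty]; simp
  simp [eE, h]

lemma ph_succ (r : ℕ) : ph (r + 1) = ph r * (1 - qv ^ (r + 1)) := by
  rw [ph, ph, Finset.prod_Icc_succ_top (by omega)]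

lemma av_rec (r : ℕ) : av (r + 1) = qv ^ (r + 1) * av (r + 1) + qv ^ r * av r := by
  have h1 : (1 : Kq) - qv ^ (r + 1) ≠ 0 := one_sub_qv_pow_ne_zero (by omega)
  have hch : (r + 1).choose 2 = r.choose 2 + r := by
    rw [Nat.choose_succ_succ]
    simp [Nat.choose_one_right]; omega
  have key : (1 - qv^(r+1)) * av (r+1) = qv^r * av r := by
    simp only [av, ph_succ, hch]
    field_simp [ph_ne_zero r, h1]
    ring
  linear_combination key

lemma range_succ_shift (M : ℕ) :
    range (M + 1) = insert 0 ((range M).map ⟨Nat.succ, Nat.succ_injective⟩) := by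
  ext x
  simp only [mem_range, mem_insert, mem_map, Function.Embedding.coeFn_mk]
  constructor
  · intro h
    rcases Nat.eq_zero_or_pos x with h0 | h0
    · exact Or.inl h0
    · exact Or.inr ⟨x - 1, by omega, by omega⟩
  · rintro (rfl | ⟨y, hy, rfl⟩) <;> omega

lemma eE_rec (M r : ℕ) :
    eE (M + 1) (r + 1) = qv ^ (r + 1) * eE M (r + 1) + qv ^ r * eE M r := by
  have h0 : (0 : ℕ) ∉ (range M).map ⟨Nat.succ, Nat.succ_injective⟩ := by simp
  rw [eE, range_succ_shift, Finset.powersetCard_succ_insert h0]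
  rw [Finset.sum_union]
  · congr 1
    · rw [Finset.powersetCard_map, Finset.sum_map, eE, Finset.mul_sum]
      apply Finset.sum_congr rfl
      intro T hT
      have hcard : T.card = r + 1 := (Finset.mem_powersetCard.mp hT).2
      simp only [RelEmbedding.coe_toEmbedding, Finset.mapEmbedding_apply]
      rw [Finset.sum_map]
      simp only [Function.Embedding.coeFn_mk, Nat.succ_eq_add_one]
      rw [Finset.sum_add_distrib, Finset.sum_const, hcard, pow_add]
      ring_nf
    · rw [Finset.sum_image, Finset.powersetCard_map, Finset.sum_map, eE, Finset.mul_sum]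
      · apply Finset.sum_congr rfl
        intro T hT
        have hcard : T.card = r := (Finset.mem_powersetCard.mp hT).2
        have h0T : (0:ℕ) ∉ (T.map ⟨Nat.succ, Nat.succ_injective⟩) := by simp
        simp only [RelEmbedding.coe_toEmbedding, Finset.mapEmbedding_apply]
        rw [Finset.sum_insert h0T, Finset.sum_map]
        simp only [Function.Embedding.coeFn_mk, Nat.succ_eq_add_one]
        rw [Finset.sum_add_distrib, Finset.sum_const, hcard, pow_add]
        ring_nf
      · intro T hT U hU hTU
        have h0T : (0:ℕ) ∉ T := fun h => by
          have := Finset.mem_powersetCard.mp hT |>.1 h; simp at this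
        have h0U : (0:ℕ) ∉ U := fun h => by
          have := Finset.mem_powersetCard.mp hU |>.1 h; simp at this
        have : T.erase 0 = U.erase 0 := by rw [← Finset.erase_insert h0T, ← Finset.erase_insert h0U, hTU]
        rwa [Finset.erase_eq_of_notMem h0T, Finset.erase_eq_of_notMem h0U] at this
  · rw [Finset.disjoint_left]
    intro T hT hT'
    obtain ⟨U, hU, rfl⟩ := Finset.mem_image.mp hT'
    have := (Finset.mem_powersetCard.mp hT).1 (Finset.mem_insert_self 0 U)
    simp at this

lemma delta_bound : ∀ M r, 𝕍 (av r - eE M r) ≤ ee (-(M : ℤ)) := by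
  intro M
  induction M with
  | zero =>
    intro r
    cases r with
    | zero => simp [av, ph, eE_zero_r, Nat.choose]
    | succ r =>
      rw [eE_M_zero, sub_zero, v_av, ee_le_ee]
      omega
  | succ M ih =>
    intro r
    cases r with
    | zero =>
      have : av 0 - eE (M+1) 0 = 0 := by simp [av, ph, eE_zero_r, Nat.choose]
      rw [this, map_zero]; exact zero_le'
    | succ r =>
      have hcast : ((M+1 : ℕ) : ℤ) = (M:ℤ)+1 := by push_cast; ring
      rw [show (-((M+1 : ℕ) : ℤ)) = -((M:ℤ)+1) by omega]
      have key : av (r+1) - eE (M+1) (r+1)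
          = qv ^ (r+1) * (av (r+1) - eE M (r+1)) + qv ^ r * (av r - eE M r) := by
        linear_combination av_rec r - eE_rec M r
      rw [key]
      apply le_trans (Valuation.map_add _ _ _)
      apply max_le
      · rw [map_mul, v_qv_pow]
        calc ee (-((r:ℤ)+1)) * 𝕍 (av (r+1) - eE M (r+1))
            ≤ ee (-((r:ℤ)+1)) * ee (-(M:ℤ)) := by
              exact mul_le_mul_right (ih (r+1)) _
          _ = ee (-((r:ℤ)+1) + -(M:ℤ)) := ee_mul _ _
          _ ≤ ee (-((M:ℤ)+1)) := by rw [ee_le_ee]; omega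
        -- note : -(↑(M+1)) = -(M+1)
      · rcases Nat.eq_zero_or_pos r with rfl | hr
        · have : av 0 - eE M 0 = 0 := by simp [av, ph, eE_zero_r, Nat.choose]
          rw [this, mul_zero, map_zero]; exact zero_le'
        · rw [map_mul, v_qv_pow]
          calc ee (-(r:ℤ)) * 𝕍 (av r - eE M r)
              ≤ ee (-(r:ℤ)) * ee (-(M:ℤ)) := mul_le_mul_right (ih r) _
            _ = ee (-(r:ℤ) + -(M:ℤ)) := ee_mul _ _
            _ ≤ ee (-((M:ℤ)+1)) := by rw [ee_le_ee]; omega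

lemma mmult_eq_count (lam : Multiset ℕ) (i : ℕ) : mmult lam i = lam.count i := by
  rw [mmult, Multiset.count, Multiset.countP_eq_card_filter]
  congr 1
  apply Multiset.filter_congr
  intro x _
  constructor <;> intro h <;> simp_all

lemma card_finsum (s : Finset ℕ) (f : ℕ → Multiset ℕ) :
    Multiset.card (∑ m ∈ s, f m) = ∑ m ∈ s, Multiset.card (f m) := by
  classical
  induction s using Finset.induction_on with
  | empty => simp
  | insert _ _ h ih => rw [Finset.sum_insert h, Finset.sum_insert h, Multiset.card_add, ih]

lemma msum_finsum (s : Finset ℕ) (f : ℕ → Multiset ℕ) :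
    (∑ m ∈ s, f m).sum = ∑ m ∈ s, (f m).sum := by
  classical
  induction s using Finset.induction_on with
  | empty => simp
  | insert _ _ h ih => rw [Finset.sum_insert h, Finset.sum_insert h, Multiset.sum_add, ih]

lemma count_sum_replicate (s : Finset ℕ) (k : ℕ → ℕ) (n : ℕ) :
    Multiset.count n (∑ m ∈ s, Multiset.replicate (k m) m) = if n ∈ s then k n else 0 := by
  rw [Multiset.count_sum']
  rw [Finset.sum_congr rfl (fun m _ => Multiset.count_replicate n m (k m))]
  simp [Finset.sum_ite_eq]

lemma decomp (lam : Multiset ℕ) (d : ℕ) (h : ∀ x ∈ lam, x ∈ Finset.Icc 1 d) :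
    lam = ∑ m ∈ Finset.Icc 1 d, Multiset.replicate (lam.count m) m := by
  ext n
  rw [count_sum_replicate]
  by_cases hn : n ∈ Finset.Icc 1 d
  · simp [hn]
  · simp only [hn, if_false]
    exact Multiset.count_eq_zero_of_notMem (fun hmem => hn (h n hmem))

lemma card_eq_sum_count (lam : Multiset ℕ) (d : ℕ) (h : ∀ x ∈ lam, x ∈ Finset.Icc 1 d) :
    Multiset.card lam = ∑ m ∈ Finset.Icc 1 d, lam.count m := by
  conv_lhs => rw [decomp lam d h]
  rw [card_finsum]
  simp [Multiset.card_replicate]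

lemma sum_eq_sum_count (lam : Multiset ℕ) (d : ℕ) (h : ∀ x ∈ lam, x ∈ Finset.Icc 1 d) :
    lam.sum = ∑ m ∈ Finset.Icc 1 d, lam.count m * m := by
  conv_lhs => rw [decomp lam d h]
  rw [msum_finsum]
  apply Finset.sum_congr rfl
  intro m _
  rw [Multiset.sum_replicate, smul_eq_mul]

lemma parts_mem {d : ℕ} (lam : d.Partition) : ∀ x ∈ lam.parts, x ∈ Finset.Icc 1 d := by
  intro x hx
  rw [Finset.mem_Icc]
  refine ⟨lam.parts_pos hx, ?_⟩
  calc x ≤ lam.parts.sum := Multiset.single_le_sum (fun y _ => Nat.zero_le y) x hx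
    _ = d := lam.parts_sum

lemma sum_antidiag_eq_sum_partition {β : Type*} [CommRing β] (d : ℕ) (c : ℕ → ℕ → β)
    (h0 : ∀ n k, n ∈ Finset.Icc 1 d → ¬ n ∣ k → c n k = 0) :
    ∑ l ∈ Finset.finsuppAntidiag (Finset.Icc 1 d) d, ∏ n ∈ Finset.Icc 1 d, c n (l n)
      = ∑ lam : d.Partition, ∏ n ∈ Finset.Icc 1 d, c n (n * (lam.parts.count n)) := by
  set A := (Finset.finsuppAntidiag (Finset.Icc 1 d) d).filter
      (fun l : ℕ →₀ ℕ => ∀ n ∈ Finset.Icc 1 d, n ∣ l n) with hA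
  have hstep : ∑ l ∈ Finset.finsuppAntidiag (Finset.Icc 1 d) d, ∏ n ∈ Finset.Icc 1 d, c n (l n)
      = ∑ l ∈ A, ∏ n ∈ Finset.Icc 1 d, c n (l n) := by
    refine (Finset.sum_subset (Finset.filter_subset _ _) ?_).symm
    intro l hl hlA
    have : ¬ ∀ n ∈ Finset.Icc 1 d, n ∣ l n := by
      intro hall
      exact hlA (Finset.mem_filter.mpr ⟨hl, hall⟩)
    push_neg at this
    obtain ⟨n, hn, hdvd⟩ := this
    exact Finset.prod_eq_zero hn (h0 n (l n) hn hdvd)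
  rw [hstep]
  refine Finset.sum_bij'
    (i := fun l hl => (⟨∑ m ∈ Finset.Icc 1 d, Multiset.replicate (l m / m) m, ?_, ?_⟩ : d.Partition))
    (j := fun lam _ => Finsupp.onFinset (Finset.Icc 1 d) (fun n => n * lam.parts.count n) ?_)
    ?_ ?_ ?_ ?_ ?_
  · -- parts_pos
    intro i hi
    rw [Multiset.mem_sum] at hi
    obtain ⟨m, hm, hmem⟩ := hi
    rw [Multiset.eq_of_mem_replicate hmem]
    exact (Finset.mem_Icc.mp hm).1
  · -- parts_sum
    obtain ⟨hl1, hl2⟩ := Finset.mem_filter.mp hl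
    rw [msum_finsum]
    calc ∑ m ∈ Finset.Icc 1 d, (Multiset.replicate (l m / m) m).sum
        = ∑ m ∈ Finset.Icc 1 d, l m := by
          apply Finset.sum_congr rfl
          intro m hm
          rw [Multiset.sum_replicate, smul_eq_mul, Nat.div_mul_cancel (hl2 m hm)]
      _ = d := (Finset.mem_finsuppAntidiag.mp hl1).1
  · -- onFinset support
    intro n hn
    have hn' : n * Multiset.count n lam.parts ≠ 0 := hn
    have hcount : Multiset.count n lam.parts ≠ 0 := by
      intro hc
      rw [hc, mul_zero] at hn'
      exact hn' rfl
    exact parts_mem lam n (Multiset.count_ne_zero.mp hcount)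
  · -- hi : maps into univ
    intro l hl
    exact Finset.mem_univ _
  · -- hj : maps into A
    intro lam _
    rw [hA, Finset.mem_filter]
    refine ⟨Finset.mem_finsuppAntidiag.mpr ⟨?_, ?_⟩, ?_⟩
    · -- sum = d
      change ∑ m ∈ Finset.Icc 1 d, m * Multiset.count m lam.parts = d
      rw [Finset.sum_congr rfl (fun m _ => mul_comm m (Multiset.count m lam.parts)),
        ← sum_eq_sum_count lam.parts d (parts_mem lam)]
      exact lam.parts_sum
    · exact Finsupp.support_onFinset_subset
    · intro n _
      simp only [Finsupp.onFinset_apply]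
      exact Dvd.intro _ rfl
  · -- left_inv : j (i l) = l
    intro l hl
    obtain ⟨hl1, hl2⟩ := Finset.mem_filter.mp hl
    ext n
    simp only [Finsupp.onFinset_apply]
    rw [count_sum_replicate]
    by_cases hn : n ∈ Finset.Icc 1 d
    · rw [if_pos hn, Nat.mul_div_cancel' (hl2 n hn)]
    · rw [if_neg hn, mul_zero]
      have hsupp := (Finset.mem_finsuppAntidiag.mp hl1).2
      by_contra h
      exact hn (hsupp (Finsupp.mem_support_iff.mpr (fun hh => h hh.symm)))
  · -- right_inv : i (j lam) = lam
    intro lam _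
    apply Nat.Partition.ext
    simp only [Finsupp.onFinset_apply]
    have hcong : ∀ m ∈ Finset.Icc 1 d,
        Multiset.replicate (m * Multiset.count m lam.parts / m) m
          = Multiset.replicate (Multiset.count m lam.parts) m := by
      intro m hm
      have hm1 : 0 < m := (Finset.mem_Icc.mp hm).1
      rw [Nat.mul_div_cancel_left _ hm1]
    rw [Finset.sum_congr rfl hcong, ← decomp lam.parts d (parts_mem lam)]
  · -- values agree
    intro l hl
    obtain ⟨hl1, hl2⟩ := Finset.mem_filter.mp hl
    apply Finset.prod_congr rfl
    intro n hn
    congr 1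
    rw [count_sum_replicate, if_pos hn, Nat.mul_div_cancel' (hl2 n hn)]

open PowerSeries in
noncomputable def fF (t : ℕ+ × ℕ) : PowerSeries Kq :=
  1 - PowerSeries.C (R := Kq) (qv ^ t.2) * (PowerSeries.X : PowerSeries Kq) ^ (t.1 : ℕ)

open PowerSeries

/-- the per-size truncated factor -/
noncomputable def gG (n M : ℕ) : PowerSeries Kq :=
  ∏ i ∈ Finset.range M, (1 - PowerSeries.C (R := Kq) (qv ^ i) * (PowerSeries.X : PowerSeries Kq) ^ n)

lemma coeff_gG (n M k : ℕ) (hn : 1 ≤ n) (hkM : k ≤ M) :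
    PowerSeries.coeff (R := Kq) k (gG n M)
      = if n ∣ k then ((-1 : Kq)) ^ (k / n) * eE M (k / n) else 0 := by
  have hexp : ∀ i ∈ Finset.range M, (1 : PowerSeries Kq) - C (R := Kq) (qv ^ i) * X ^ n
      = C (R := Kq) (-(qv ^ i)) * X ^ n + 1 := by
    intro i _
    rw [map_neg]
    ring
  rw [gG, Finset.prod_congr rfl hexp, Finset.prod_add]
  have hterm : ∀ T ∈ (Finset.range M).powerset,
      (∏ i ∈ T, (C (R := Kq) (-(qv ^ i)) * X ^ n)) * ∏ _i ∈ Finset.range M \ T, (1 : PowerSeries Kq)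
        = C (R := Kq) ((-1 : Kq) ^ T.card * qv ^ (∑ i ∈ T, i)) * X ^ (n * T.card) := by
    intro T _
    rw [Finset.prod_const_one, mul_one, Finset.prod_mul_distrib, ← map_prod, Finset.prod_const,
      ← pow_mul]
    congr 2
    rw [Finset.prod_congr rfl (fun i _ => neg_eq_neg_one_mul (qv ^ i)),
      Finset.prod_mul_distrib, Finset.prod_const, Finset.prod_pow_eq_pow_sum]
  rw [Finset.sum_congr rfl hterm]
  have hcoeff : ∀ T ∈ (Finset.range M).powerset,
      PowerSeries.coeff (R := Kq) k (C (R := Kq) ((-1 : Kq) ^ T.card * qv ^ (∑ i ∈ T, i)) * X ^ (n * T.card))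
        = if n * T.card = k then (-1 : Kq) ^ T.card * qv ^ (∑ i ∈ T, i) else 0 := by
    intro T _
    rw [coeff_C_mul, coeff_X_pow]
    by_cases h : k = n * T.card
    · rw [if_pos h, if_pos h.symm, mul_one]
    · rw [if_neg h, if_neg (fun hh => h hh.symm), mul_zero]
  rw [map_sum, Finset.sum_congr rfl hcoeff, Finset.sum_powerset]
  have hinner : ∀ j ∈ Finset.range ((Finset.range M).card + 1),
      (∑ T ∈ (Finset.range M).powersetCard j,
        if n * T.card = k then (-1 : Kq) ^ T.card * qv ^ (∑ i ∈ T, i) else 0)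
        = if n * j = k then (-1 : Kq) ^ j * eE M j else 0 := by
    intro j _
    by_cases h : n * j = k
    · rw [if_pos h, eE, Finset.mul_sum]
      apply Finset.sum_congr rfl
      intro T hT
      have hc : T.card = j := (Finset.mem_powersetCard.mp hT).2
      rw [hc, if_pos h]
    · rw [if_neg h]
      apply Finset.sum_eq_zero
      intro T hT
      have hc : T.card = j := (Finset.mem_powersetCard.mp hT).2
      rw [hc, if_neg h]
  rw [Finset.sum_congr rfl hinner, Finset.card_range]
  by_cases hdvd : n ∣ k
  · rw [if_pos hdvd]
    have hval : (if n * (k/n) = k then ((-1:Kq))^(k/n) * eE M (k/n) else 0)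
        = ((-1:Kq))^(k/n) * eE M (k/n) := if_pos (Nat.mul_div_cancel' hdvd)
    rw [← hval]
    apply Finset.sum_eq_single (k / n)
    · intro j _ hj
      apply if_neg
      intro h
      exact hj (by rw [← h, Nat.mul_div_cancel_left _ (by omega : 0 < n)])
    · intro habs
      exfalso
      apply habs
      rw [Finset.mem_range]
      have : k / n ≤ k := Nat.div_le_self k n
      omega
  · rw [if_neg hdvd]
    apply Finset.sum_eq_zero
    intro j _
    apply if_neg
    intro h
    exact hdvd ⟨j, h.symm⟩

/-- integrality of coefficients -/
def Int1 (φ : PowerSeries Kq) : Prop := ∀ k, 𝕍 (PowerSeries.coeff (R := Kq) k φ) ≤ 1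

lemma int1_one : Int1 1 := by
  intro k
  rw [PowerSeries.coeff_one]
  by_cases h : k = 0 <;> simp [h]

lemma int1_mul {φ ψ : PowerSeries Kq} (hφ : Int1 φ) (hψ : Int1 ψ) : Int1 (φ * ψ) := by
  intro k
  rw [PowerSeries.coeff_mul]
  apply Valuation.map_sum_le
  intro p _
  rw [map_mul]
  calc 𝕍 (coeff (R := Kq) p.1 φ) * 𝕍 (coeff (R := Kq) p.2 ψ) ≤ 1 * 1 :=
        mul_le_mul' (hφ p.1) (hψ p.2)
    _ = 1 := mul_one 1

lemma int1_fF (t : ℕ+ × ℕ) : Int1 (fF t) := by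
  intro k
  rw [fF, map_sub]
  apply le_trans (Valuation.map_sub _ _ _)
  apply max_le
  · rw [PowerSeries.coeff_one]
    split_ifs
    · rw [map_one]
    · rw [map_zero]; exact zero_le'
  · rw [coeff_C_mul, coeff_X_pow]
    split_ifs
    · rw [mul_one]; exact v_qv_pow_le_one _
    · rw [mul_zero, map_zero]; exact zero_le'

lemma int1_prod (s : Finset (ℕ+ × ℕ)) : Int1 (∏ t ∈ s, fF t) := by
  classical
  induction s using Finset.induction_on with
  | empty => simpa using int1_one
  | insert _ _ h ih =>
      rw [Finset.prod_insert h]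
      exact int1_mul (int1_fF _) ih

lemma vprod_le_one (s : Finset ℕ) (y : ℕ → Kq) (hy : ∀ i ∈ s, 𝕍 (y i) ≤ 1) :
    𝕍 (∏ i ∈ s, y i) ≤ 1 := by
  rw [map_prod]
  exact Finset.prod_le_one' hy

lemma telescope (s : Finset ℕ) (x y : ℕ → Kq) (cv : ℤₘ₀) (hc : cv ≤ 1) :
    (∀ i ∈ s, 𝕍 (x i) ≤ 1) → (∀ i ∈ s, 𝕍 (y i) ≤ 1) → (∀ i ∈ s, 𝕍 (x i - y i) ≤ cv) →
    𝕍 (∏ i ∈ s, x i - ∏ i ∈ s, y i) ≤ cv := by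
  classical
  induction s using Finset.induction_on with
  | empty => intro _ _ _; simpa using zero_le'
  | @insert a s ha ih =>
      intro hx hy hxy
      rw [Finset.prod_insert ha, Finset.prod_insert ha]
      have key : x a * ∏ i ∈ s, x i - y a * ∏ i ∈ s, y i
          = x a * (∏ i ∈ s, x i - ∏ i ∈ s, y i) + (x a - y a) * ∏ i ∈ s, y i := by ring
      rw [key]
      apply le_trans (Valuation.map_add _ _ _)
      apply max_le
      · rw [map_mul]
        calc 𝕍 (x a) * 𝕍 (∏ i ∈ s, x i - ∏ i ∈ s, y i) ≤ 1 * cv :=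
              mul_le_mul' (hx a (Finset.mem_insert_self a s))
                (ih (fun i hi => hx i (Finset.mem_insert_of_mem hi))
                    (fun i hi => hy i (Finset.mem_insert_of_mem hi))
                    (fun i hi => hxy i (Finset.mem_insert_of_mem hi)))
          _ = cv := one_mul cv
      · rw [map_mul]
        calc 𝕍 (x a - y a) * 𝕍 (∏ i ∈ s, y i) ≤ cv * 1 :=
              mul_le_mul' (hxy a (Finset.mem_insert_self a s))
                (vprod_le_one s y (fun i hi => hy i (Finset.mem_insert_of_mem hi)))
          _ = cv := mul_one cv

/-- removing far-away factors changes a coefficient only a little -/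
lemma extra_factors (d Nb : ℕ) (u : Finset (ℕ+ × ℕ)) (φ : PowerSeries Kq) (hφ : Int1 φ) :
    (∀ t ∈ u, (t.1 : ℕ) ≤ d → Nb ≤ t.2) →
    𝕍 (PowerSeries.coeff (R := Kq) d (φ * ∏ t ∈ u, fF t) - PowerSeries.coeff (R := Kq) d φ)
      ≤ ee (-(Nb : ℤ)) := by
  classical
  induction u using Finset.induction_on with
  | empty => intro _; simpa using zero_le'
  | @insert a u ha ih =>
      intro hu
      have h1 : φ * ∏ t ∈ insert a u, fF t = (φ * ∏ t ∈ u, fF t) * fF a := by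
        rw [Finset.prod_insert ha]; ring
      set ψ := φ * ∏ t ∈ u, fF t with hψdef
      have hψ : Int1 ψ := int1_mul hφ (int1_prod u)
      have step1 : PowerSeries.coeff (R := Kq) d (ψ * fF a) - PowerSeries.coeff (R := Kq) d ψ
          = -(qv ^ a.2 * (if (a.1 : ℕ) ≤ d then PowerSeries.coeff (R := Kq) (d - (a.1:ℕ)) ψ else 0)) := by
        rw [fF]
        have : ψ * (1 - C (R := Kq) (qv ^ a.2) * X ^ (a.1 : ℕ))
            = ψ - (ψ * C (R := Kq) (qv ^ a.2)) * X ^ (a.1 : ℕ) := by ring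
        rw [this, map_sub, coeff_mul_X_pow']
        by_cases h : (a.1 : ℕ) ≤ d
        · rw [if_pos h, if_pos h, coeff_mul_C]
          ring
        · rw [if_neg h, if_neg h]
          ring
      have vstep1 : 𝕍 (PowerSeries.coeff (R := Kq) d (ψ * fF a) - PowerSeries.coeff (R := Kq) d ψ)
          ≤ ee (-(Nb : ℤ)) := by
        rw [step1, Valuation.map_neg, map_mul]
        by_cases h : (a.1 : ℕ) ≤ d
        · rw [if_pos h]
          have hN : Nb ≤ a.2 := hu a (Finset.mem_insert_self a u) h
          calc 𝕍 (qv ^ a.2) * 𝕍 (PowerSeries.coeff (R := Kq) (d - (a.1:ℕ)) ψ)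
              ≤ 𝕍 (qv ^ a.2) * 1 := mul_le_mul' le_rfl (hψ _)
            _ = 𝕍 (qv ^ a.2) := mul_one _
            _ ≤ ee (-(Nb : ℤ)) := by rw [v_qv_pow, ee_le_ee]; omega
        · rw [if_neg h, map_zero, mul_zero]
          exact zero_le'
      have := Valuation.map_add 𝕍 (PowerSeries.coeff (R := Kq) d (ψ * fF a) - PowerSeries.coeff (R := Kq) d ψ)
        (PowerSeries.coeff (R := Kq) d ψ - PowerSeries.coeff (R := Kq) d φ)
      rw [h1]
      calc 𝕍 (PowerSeries.coeff (R := Kq) d (ψ * fF a) - PowerSeries.coeff (R := Kq) d φ)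
          = 𝕍 ((PowerSeries.coeff (R := Kq) d (ψ * fF a) - PowerSeries.coeff (R := Kq) d ψ)
              + (PowerSeries.coeff (R := Kq) d ψ - PowerSeries.coeff (R := Kq) d φ)) := by ring_nf
        _ ≤ max (𝕍 (PowerSeries.coeff (R := Kq) d (ψ * fF a) - PowerSeries.coeff (R := Kq) d ψ))
              (𝕍 (PowerSeries.coeff (R := Kq) d ψ - PowerSeries.coeff (R := Kq) d φ)) := Valuation.map_add _ _ _
        _ ≤ ee (-(Nb : ℤ)) := max_le vstep1 (ih (fun t ht htd => hu t (Finset.mem_insert_of_mem ht) htd))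

/-- the limiting coefficient -/
noncomputable def Ld (d : ℕ) : Kq :=
  ∑ lam : d.Partition, ∏ n ∈ Finset.Icc 1 d,
    ((-1 : Kq) ^ (Multiset.count n lam.parts) * av (Multiset.count n lam.parts))

lemma sum_Icc_eq (r : ℕ) : (∑ j ∈ Finset.Icc 1 r, j) = r.choose 2 + r := by
  induction r with
  | zero => simp
  | succ r ih =>
      rw [Finset.sum_Icc_succ_top (by omega : 1 ≤ r + 1), ih]
      have hch : (r + 1).choose 2 = r.choose 2 + r := by
        rw [Nat.choose_succ_succ]
        simp [Nat.choose_one_right]; omega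
      omega

lemma factor_eq (r : ℕ) :
    (qv⁻¹) ^ r / (∏ j ∈ Finset.Icc 1 r, (1 - (qv⁻¹) ^ j)) = (-1 : Kq) ^ r * av r := by
  have hprod : (∏ j ∈ Finset.Icc 1 r, (1 - (qv⁻¹) ^ j))
      = (-1 : Kq) ^ r * (qv ^ (∑ j ∈ Finset.Icc 1 r, j))⁻¹ * ph r := by
    have hj : ∀ j ∈ Finset.Icc 1 r, (1 : Kq) - (qv⁻¹) ^ j = (-1) * (qv ^ j)⁻¹ * (1 - qv ^ j) := by
      intro j _
      rw [inv_pow]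
      have : qv ^ j ≠ 0 := pow_ne_zero _ qv_ne_zero
      field_simp
      ring
    have hph : (∏ j ∈ Finset.Icc 1 r, (1 - qv ^ j)) = ph r := rfl
    rw [Finset.prod_congr rfl hj, Finset.prod_mul_distrib, Finset.prod_mul_distrib,
      Finset.prod_const, Finset.prod_inv_distrib, Finset.prod_pow_eq_pow_sum, hph,
      Nat.card_Icc, Nat.add_sub_cancel]
  rw [hprod, inv_pow, sum_Icc_eq, pow_add, av]
  have h1 : ((-1 : Kq)) ^ r ≠ 0 := pow_ne_zero _ (by norm_num)
  have h2 : qv ^ r.choose 2 ≠ 0 := pow_ne_zero _ qv_ne_zero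
  have h3 : qv ^ r ≠ 0 := pow_ne_zero _ qv_ne_zero
  field_simp [ph_ne_zero]
  have h4 : ((-1 : Kq)) ^ r * ((-1 : Kq)) ^ r = 1 := by
    rw [← pow_add]
    exact Even.neg_one_pow (α := Kq) ⟨r, rfl⟩
  linear_combination (-1 : Kq) * h4

lemma lhs_term_eq (d : ℕ) (lam : d.Partition) :
    (qv⁻¹) ^ mlen lam.parts / bval lam.parts qv⁻¹
      = ∏ n ∈ Finset.Icc 1 d,
          ((-1 : Kq) ^ (Multiset.count n lam.parts) * av (Multiset.count n lam.parts)) := by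
  have hmem := parts_mem lam
  rw [bval, lam.parts_sum, mlen, card_eq_sum_count lam.parts d hmem,
    ← Finset.prod_pow_eq_pow_sum, ← Finset.prod_div_distrib]
  apply Finset.prod_congr rfl
  intro n _
  rw [mmult_eq_count]
  exact factor_eq (Multiset.count n lam.parts)

lemma ee_le_one (m : ℕ) : ee (-(m : ℤ)) ≤ 1 := by
  rw [← ee_one, ee_le_ee]; omega

lemma v_neg_one_pow (r : ℕ) : 𝕍 ((-1 : Kq) ^ r) = 1 := by
  rw [map_pow, Valuation.map_neg, map_one, one_pow]

lemma trunc_close (d M : ℕ) (hd : 1 ≤ d) (hM : d ≤ M) :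
    𝕍 (PowerSeries.coeff (R := Kq) d (∏ n ∈ Finset.Icc 1 d, gG n M) - Ld d) ≤ ee (-(M : ℤ)) := by
  classical
  rw [PowerSeries.coeff_prod]
  set c : ℕ → ℕ → Kq := fun n k => if n ∣ k then ((-1 : Kq)) ^ (k / n) * eE M (k / n) else 0
    with hc
  have hcongr : ∀ l ∈ Finset.finsuppAntidiag (Finset.Icc 1 d) d,
      ∏ n ∈ Finset.Icc 1 d, PowerSeries.coeff (R := Kq) (l n) (gG n M)
        = ∏ n ∈ Finset.Icc 1 d, c n (l n) := by
    intro l hl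
    apply Finset.prod_congr rfl
    intro n hn
    have hln : l n ≤ d := by
      obtain ⟨hsum, _⟩ := Finset.mem_finsuppAntidiag.mp hl
      calc l n ≤ ∑ m ∈ Finset.Icc 1 d, l m :=
            Finset.single_le_sum (f := fun m => l m) (fun _ _ => Nat.zero_le _) hn
        _ = d := hsum
    exact coeff_gG n M (l n) (Finset.mem_Icc.mp hn).1 (le_trans hln hM)
  rw [Finset.sum_congr rfl hcongr,
    sum_antidiag_eq_sum_partition d c (fun n k _ hnd => if_neg hnd), Ld,
    ← Finset.sum_sub_distrib]
  apply Valuation.map_sum_le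
  intro lam _
  have hcv : ∀ n ∈ Finset.Icc 1 d, c n (n * Multiset.count n lam.parts)
      = (-1 : Kq) ^ (Multiset.count n lam.parts) * eE M (Multiset.count n lam.parts) := by
    intro n hn
    have hn1 : 1 ≤ n := (Finset.mem_Icc.mp hn).1
    rw [hc]
    dsimp only
    rw [if_pos (dvd_mul_right n _), Nat.mul_div_cancel_left _ (by omega : 0 < n)]
  rw [Finset.prod_congr rfl hcv]
  apply telescope _ _ _ (ee (-(M : ℤ))) (ee_le_one M)
  · intro n _
    rw [map_mul, v_neg_one_pow, one_mul]
    exact v_eE_le_one M _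
  · intro n _
    rw [map_mul, v_neg_one_pow, one_mul]
    exact v_av_le_one _
  · intro n _
    have : (-1 : Kq) ^ (Multiset.count n lam.parts) * eE M (Multiset.count n lam.parts)
        - (-1 : Kq) ^ (Multiset.count n lam.parts) * av (Multiset.count n lam.parts)
        = (-1 : Kq) ^ (Multiset.count n lam.parts)
            * (eE M (Multiset.count n lam.parts) - av (Multiset.count n lam.parts)) := by ring
    rw [this, map_mul, v_neg_one_pow, one_mul, Valuation.map_sub_swap]
    exact delta_bound M _

lemma map_range_Icc (k : ℕ) :
    (Finset.range k).map ⟨Nat.succ, Nat.succ_injective⟩ = Finset.Icc 1 k := by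
  ext x
  simp only [Finset.mem_map, Finset.mem_range, Function.Embedding.coeFn_mk, Finset.mem_Icc]
  constructor
  · rintro ⟨y, hy, rfl⟩; omega
  · intro h; exact ⟨x - 1, by omega, by omega⟩

instance : T2Space (PowerSeries Kq) := inferInstanceAs (T2Space ((Unit →₀ ℕ) → Kq))

lemma coeff_tendsto (k : ℕ) :
    Filter.Tendsto (fun s : Finset (ℕ+ × ℕ) => PowerSeries.coeff (R := Kq) k (∏ t ∈ s, fF t))
      Filter.atTop (nhds (if k = 0 then (1 : Kq) else Ld k)) := by
  classical
  by_cases hk : k = 0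
  · rw [if_pos hk]
    have hconst : ∀ s : Finset (ℕ+ × ℕ), PowerSeries.coeff (R := Kq) k (∏ t ∈ s, fF t) = 1 := by
      intro s
      rw [hk, PowerSeries.coeff_zero_eq_constantCoeff_apply, map_prod]
      apply Finset.prod_eq_one
      intro t _
      rw [fF, map_sub, map_one, map_mul, PowerSeries.constantCoeff_C, map_pow,
        PowerSeries.constantCoeff_X, zero_pow t.1.pos.ne', mul_zero, sub_zero]
    have hfun : (fun s : Finset (ℕ+ × ℕ) => PowerSeries.coeff (R := Kq) k (∏ t ∈ s, fF t))
        = fun _ => (1 : Kq) := funext hconst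
    rw [hfun]
    exact tendsto_const_nhds
  · rw [if_neg hk]
    have hd : 1 ≤ k := by omega
    rw [Filter.tendsto_def]
    intro S hS
    obtain ⟨γ₁, hγ⟩ := Valued.mem_nhds.mp hS
    set γ : ℤₘ₀ := MonoidWithZeroHom.ValueGroup₀.embedding γ₁.1 with hγdef
    obtain ⟨g, hg⟩ := WithZero.ne_zero_iff_exists.mp
      (MonoidWithZeroHom.ValueGroup₀.embedding_unit_ne_zero γ₁)
    set M := k + (Multiplicative.toAdd g).natAbs + 1 with hMdef
    have hlt : ee (-(M : ℤ)) < (γ : ℤₘ₀) := by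
      rw [hγdef, ← hg, ee, WithZero.coe_lt_coe]
      conv_rhs => rw [← ofAdd_toAdd g]
      rw [Multiplicative.ofAdd_lt]
      omega
    set s₀ : Finset (ℕ+ × ℕ) :=
      ((Finset.range k).map ⟨Nat.succPNat, Nat.succPNat_injective⟩) ×ˢ (Finset.range M)
      with hs₀def
    rw [Filter.mem_atTop_sets]
    refine ⟨s₀, fun s hs => ?_⟩
    have hss : s₀ ⊆ s := hs
    apply Set.mem_preimage.mpr
    apply hγ
    rw [Set.mem_setOf_eq, Valuation.restrict_lt_iff_lt_embedding]
    have hsplit : (∏ t ∈ s, fF t) = (∏ t ∈ s₀, fF t) * ∏ t ∈ s \ s₀, fF t := by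
      rw [← Finset.prod_sdiff hss, mul_comm]
    have hu : ∀ t ∈ s \ s₀, (t.1 : ℕ) ≤ k → M ≤ t.2 := by
      intro t ht htd
      by_contra hcon
      push_neg at hcon
      have htin : t ∈ s₀ := by
        rw [hs₀def, Finset.mem_product]
        constructor
        · rw [Finset.mem_map]
          refine ⟨(t.1 : ℕ) - 1, Finset.mem_range.mpr (by have := t.1.pos; omega), ?_⟩
          apply PNat.coe_injective
          simp only [Function.Embedding.coeFn_mk, Nat.succPNat_coe]
          have := t.1.pos
          omega
        · exact Finset.mem_range.mpr (by omega)
      exact (Finset.mem_sdiff.mp ht).2 htin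
    have h1 : 𝕍 (PowerSeries.coeff (R := Kq) k (∏ t ∈ s, fF t)
        - PowerSeries.coeff (R := Kq) k (∏ t ∈ s₀, fF t)) ≤ ee (-(M : ℤ)) := by
      rw [hsplit]
      exact extra_factors k M (s \ s₀) (∏ t ∈ s₀, fF t) (int1_prod s₀) hu
    have hprod_eq : (∏ t ∈ s₀, fF t) = ∏ n ∈ Finset.Icc 1 k, gG n M := by
      rw [hs₀def, Finset.prod_product, Finset.prod_map, ← map_range_Icc k, Finset.prod_map]
      apply Finset.prod_congr rfl
      intro j _
      rw [gG]
      apply Finset.prod_congr rfl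
      intro i _
      rfl
    have h2 : 𝕍 (PowerSeries.coeff (R := Kq) k (∏ t ∈ s₀, fF t) - Ld k) ≤ ee (-(M : ℤ)) := by
      rw [hprod_eq]
      exact trunc_close k M hd (by omega)
    have hdecomp : PowerSeries.coeff (R := Kq) k (∏ t ∈ s, fF t) - Ld k
        = (PowerSeries.coeff (R := Kq) k (∏ t ∈ s, fF t) - PowerSeries.coeff (R := Kq) k (∏ t ∈ s₀, fF t))
          + (PowerSeries.coeff (R := Kq) k (∏ t ∈ s₀, fF t) - Ld k) := (sub_add_sub_cancel _ _ _).symm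
    calc 𝕍 (PowerSeries.coeff (R := Kq) k (∏ t ∈ s, fF t) - Ld k)
        = 𝕍 ((PowerSeries.coeff (R := Kq) k (∏ t ∈ s, fF t) - PowerSeries.coeff (R := Kq) k (∏ t ∈ s₀, fF t))
            + (PowerSeries.coeff (R := Kq) k (∏ t ∈ s₀, fF t) - Ld k)) := by rw [← hdecomp]
      _ ≤ max (𝕍 (PowerSeries.coeff (R := Kq) k (∏ t ∈ s, fF t)
              - PowerSeries.coeff (R := Kq) k (∏ t ∈ s₀, fF t)))
            (𝕍 (PowerSeries.coeff (R := Kq) k (∏ t ∈ s₀, fF t) - Ld k)) := Valuation.map_add _ _ _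
      _ ≤ ee (-(M : ℤ)) := max_le h1 h2
      _ < (γ : ℤₘ₀) := hlt

/-- The `g = 1` specialization of Hua's product formula, a `q`-deformed identity of Euler
type:  `1 + ∑_λ q^{-ℓ(λ)}/b_λ(q⁻¹) · X^{|λ|} = ∏_{n ≥ 1} ∏_{i ≥ 0} (1 - qⁱ Xⁿ)`,
the sum running over all (nonempty) partitions `λ`.  Both sides are formal power series
in `X` whose coefficients are expanded in the field `ℚ((q))`. -/
theorem hua_identity_g_one :
    (PowerSeries.mk fun n => if n = 0 then (1 : Kq) else
        ∑ lam : n.Partition, (qv⁻¹) ^ mlen lam.parts / bval lam.parts qv⁻¹) =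
      ∏' t : ℕ+ × ℕ,
        (1 - PowerSeries.C (R := Kq) (qv ^ t.2) * (PowerSeries.X : PowerSeries Kq) ^ (t.1 : ℕ)) := by
  classical
  set P : PowerSeries Kq := PowerSeries.mk (fun n => if n = 0 then (1 : Kq) else
      ∑ lam : n.Partition, (qv⁻¹) ^ mlen lam.parts / bval lam.parts qv⁻¹) with hPdef
  have hP : ∀ k : ℕ, PowerSeries.coeff (R := Kq) k P = if k = 0 then (1 : Kq) else Ld k := by
    intro k
    rw [hPdef, PowerSeries.coeff_mk]
    by_cases hk : k = 0
    · rw [if_pos hk, if_pos hk]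
    · rw [if_neg hk, if_neg hk, Ld]
      exact Finset.sum_congr rfl (fun lam _ => lhs_term_eq k lam)
  suffices h : HasProd fF P by
    exact h.tprod_eq.symm
  rw [HasProd]
  refine tendsto_pi_nhds.mpr ?_
  intro x
  rw [Finsupp.unique_single x]
  have hgoal := coeff_tendsto (x default)
  rw [← hP (x default)] at hgoal
  exact hgoal
end
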